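/- Let C be a well-powered category with small coproducts, wide pullbacks, and strong epi–mono factorizations, and let F : C ⥤ C preserve monomorphisms, intersections, and inverse images (pullbacks along monomorphisms). If (R, r, i_R) is a reachable I-pointed F-coalgebra and e : (R, r, i_R) → (Q, q, i_Q) is a homomorphism of I-pointed coalgebras whose underlying morphism is a strong epimorphism, then (Q, q, i_Q) is reachable. In other words, reachable I-pointed F-coalgebras are closed under quotients. -/

import Mathlib

open CategoryTheory CategoryTheory.Limits

universe w v u

variable {C : Type u} [Category.{v} C]

/-- A functor preserves monomorphisms. -/
def PreservesMonos (F : C ⥤ C) : Prop :=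
  ∀ ⦃X Y : C⦄ (f : X ⟶ Y), Mono f → Mono (F.map f)

/-- The induced map on subobject lattices of a mono-preserving functor. -/
noncomputable def subMap {F : C ⥤ C} (hF : PreservesMonos F) {Y : C} (m : Subobject Y) :
    Subobject (F.obj Y) :=
  letI : Mono (F.map m.arrow) := hF m.arrow inferInstance
  Subobject.mk (F.map m.arrow)

/-- A mono-preserving functor preserves intersections if the induced maps on subobject
lattices preserve arbitrary infima. -/
def PreservesIntersections [WellPowered.{v} C] [HasWidePullbacks.{v} C] {F : C ⥤ C}
    (hF : PreservesMonos F) : Prop :=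
  ∀ ⦃Y : C⦄ (s : Set (Subobject Y)), subMap hF (sInf s) = sInf (subMap hF '' s)

/-- The "next time" operator of a morphism `f : X ⟶ F.obj Y`. -/
noncomputable def nextTime [HasPullbacks C] {F : C ⥤ C} (hF : PreservesMonos F)
    {X Y : C} (f : X ⟶ F.obj Y) (n : Subobject Y) : Subobject X :=
  (Subobject.pullback f).obj (subMap hF n)

/-- The "previous time" operator of a morphism `f : X ⟶ F.obj Y`: it sends a subobject `m` of
`X` to the least subobject `n` of `Y` such that `m.arrow ≫ f` factors through `F.map n.arrow`. -/
noncomputable def prevTime [WellPowered.{v} C] [HasWidePullbacks.{v} C] (F : C ⥤ C)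
    {X Y : C} (f : X ⟶ F.obj Y) (m : Subobject X) : Subobject Y :=
  sInf {n : Subobject Y | ∃ g : (m : C) ⟶ F.obj (n : C), g ≫ F.map n.arrow = m.arrow ≫ f}

/-- An `I`-pointed coalgebra `(X, c, i)` is reachable if every monomorphic homomorphism of
`I`-pointed coalgebras into it is an isomorphism. -/
def Reachable (F : C ⥤ C) {I X : C} (c : X ⟶ F.obj X) (i : I ⟶ X) : Prop :=
  ∀ ⦃S : C⦄ (s : S ⟶ F.obj S) (iS : I ⟶ S) (m : S ⟶ X),
    Mono m → s ≫ F.map m = m ≫ c → iS ≫ m = i → IsIso m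
/-- A functor preserves inverse images if it preserves pullback squares in which (at least)
one of the two morphisms being pulled back is a monomorphism. -/
def PreservesInverseImages (F : C ⥤ C) : Prop :=
  ∀ ⦃P X Y Z : C⦄ (fst : P ⟶ X) (snd : P ⟶ Y) (f : X ⟶ Z) (g : Y ⟶ Z), Mono g →
    IsPullback fst snd f g → IsPullback (F.map fst) (F.map snd) (F.map f) (F.map g)

/-- **Reachable coalgebras are closed under quotients.**  If `F` preserves monomorphisms,
intersections and inverse images, `(R, r, i_R)` is a reachable `I`-pointed `F`-coalgebra and
`e : (R, r, i_R) → (Q, q, i_Q)` is a homomorphism of `I`-pointed coalgebras whose underlying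
morphism is a strong epimorphism, then `(Q, q, i_Q)` is reachable. -/
theorem reachable_closed_under_quotients
    [WellPowered.{v} C] [HasWidePullbacks.{v} C] [HasCoproducts.{v} C]
    [HasStrongEpiMonoFactorisations C]
    (F : C ⥤ C) (hF : PreservesMonos F) (hInt : PreservesIntersections hF)
    (hInv : PreservesInverseImages F)
    {I R Q : C} (r : R ⟶ F.obj R) (i_R : I ⟶ R)
    (q : Q ⟶ F.obj Q) (i_Q : I ⟶ Q)
    (hR_reach : Reachable F r i_R)
    (e : R ⟶ Q) (he : StrongEpi e)
    (he_coalg : r ≫ F.map e = e ≫ q) (he_pt : i_R ≫ e = i_Q) :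
    Reachable F q i_Q := by
  intro S s i_S m hm heq hpt
  haveI := hm
  haveI : HasPullbacks C := hasPullbacks_of_hasWidePullbacks C
  -- pull back `m` along `e`
  let P := pullback e m
  let fst : P ⟶ R := pullback.fst e m
  let snd : P ⟶ S := pullback.snd e m
  have hpb : IsPullback fst snd e m := IsPullback.of_hasPullback e m
  have hFpb : IsPullback (F.map fst) (F.map snd) (F.map e) (F.map m) :=
    hInv fst snd e m hm hpb
  have hw : (fst ≫ r) ≫ F.map e = (snd ≫ s) ≫ F.map m := by
    rw [Category.assoc, he_coalg, Category.assoc, heq, ← Category.assoc,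
      pullback.condition, Category.assoc]
  let p : P ⟶ F.obj P := hFpb.lift (fst ≫ r) (snd ≫ s) hw
  have hpf : p ≫ F.map fst = fst ≫ r := hFpb.lift_fst _ _ _
  let i_P : I ⟶ P := pullback.lift i_R i_S (by rw [he_pt, hpt])
  have hif : i_P ≫ fst = i_R := pullback.lift_fst _ _ _
  haveI : Mono fst := pullback.fst_of_mono
  haveI : IsIso fst := hR_reach p i_P fst inferInstance hpf hif
  have he' : (inv fst ≫ snd) ≫ m = e := by
    rw [Category.assoc, ← pullback.condition, IsIso.inv_hom_id_assoc]
  haveI : StrongEpi ((inv fst ≫ snd) ≫ m) := by rw [he']; exact he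
  haveI : StrongEpi m := strongEpi_of_strongEpi (inv fst ≫ snd) m
  exact isIso_of_mono_of_strongEpi m
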